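/- Let S be a nonempty finite type, P a γ-contractive row-stochastic matrix on S with γ ∈ [0,1), d∞ a stationary distribution of P, and g : S → ℝ with 0 ≤ g s ≤ 1 for all s. Then for each s ∈ S the series h(s) = ∑_{m=0}^{∞} ((e_s ⬝ P^m) · g − d∞ · g) converges absolutely, and max_s |h(s)| ≤ 2/(1 − γ), where e_s denotes the point-mass probability vector at s. -/
import Mathlib


/-- A probability vector on a finite type: nonnegative entries summing to 1. -/
def IsProbVec {S : Type*} [Fintype S] (d : S → ℝ) : Prop :=
  (∀ s, 0 ≤ d s) ∧ ∑ s, d s = 1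

/-- A row-stochastic matrix: every row is a probability vector. -/
def RowStochastic {S : Type*} [Fintype S] (P : S → S → ℝ) : Prop :=
  ∀ s, IsProbVec (P s)

/-- Row-vector–matrix multiplication: (d ⬝ P) s' = ∑ s, d s · P s s'. -/
def vmul {S : Type*} [Fintype S] (d : S → ℝ) (P : S → S → ℝ) : S → ℝ :=
  fun s' => ∑ s, d s * P s s'

/-- `iter d P m = d ⬝ P^m`. -/
def iter {S : Type*} [Fintype S] (d : S → ℝ) (P : S → S → ℝ) : ℕ → S → ℝ
  | 0 => d
  | m + 1 => vmul (iter d P m) P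

/-- L1 norm of a vector: ‖x‖₁ = ∑ s, |x s|. -/
def l1 {S : Type*} [Fintype S] (x : S → ℝ) : ℝ := ∑ s, |x s|

/-- Dot product x · v = ∑ s, x s · v s. -/
def dot {S : Type*} [Fintype S] (x v : S → ℝ) : ℝ := ∑ s, x s * v s

/-- The point-mass probability vector at `s`. -/
def pm {S : Type*} [DecidableEq S] (s : S) : S → ℝ := fun s' => if s' = s then 1 else 0

/-- γ-contractivity. -/
def Contractive {S : Type*} [Fintype S] (γ : ℝ) (P : S → S → ℝ) : Prop :=
  ∀ d d' : S → ℝ, IsProbVec d → IsProbVec d' →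
    l1 (fun s => vmul d P s - vmul d' P s) ≤ γ * l1 (fun s => d s - d' s)

lemma vmul_prob {S : Type*} [Fintype S] {d : S → ℝ} {P : S → S → ℝ}
    (hd : IsProbVec d) (hP : RowStochastic P) : IsProbVec (vmul d P) := by
  constructor
  · intro s'
    exact Finset.sum_nonneg fun s _ => mul_nonneg (hd.1 s) ((hP s).1 s')
  · rw [show (∑ s', vmul d P s') = ∑ s', ∑ s, d s * P s s' from rfl,
      Finset.sum_comm]
    calc (∑ s, ∑ s', d s * P s s') = ∑ s, d s * ∑ s', P s s' := by
          simp [Finset.mul_sum]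
      _ = 1 := by
          simp only [fun s => (hP s).2, mul_one]; exact hd.2

lemma iter_prob {S : Type*} [Fintype S] {d : S → ℝ} {P : S → S → ℝ}
    (hd : IsProbVec d) (hP : RowStochastic P) (m : ℕ) : IsProbVec (iter d P m) := by
  induction m with
  | zero => exact hd
  | succ n ih => exact vmul_prob ih hP

lemma iter_stat {S : Type*} [Fintype S] {dinf : S → ℝ} {P : S → S → ℝ}
    (hstat : vmul dinf P = dinf) (m : ℕ) : iter dinf P m = dinf := by
  induction m with
  | zero => rfl
  | succ n ih => show vmul (iter dinf P n) P = dinf; rw [ih, hstat]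

lemma pm_prob {S : Type*} [Fintype S] [DecidableEq S] (s : S) : IsProbVec (pm s) := by
  constructor
  · intro s'; unfold pm; positivity
  · simp [pm]

lemma contract_pow {S : Type*} [Fintype S] {γ : ℝ} {P : S → S → ℝ}
    (hc : Contractive γ P) (hP : RowStochastic P) (hγ0 : 0 ≤ γ)
    {d d' : S → ℝ} (hd : IsProbVec d) (hd' : IsProbVec d') (m : ℕ) :
    l1 (fun s => iter d P m s - iter d' P m s) ≤ γ ^ m * l1 (fun s => d s - d' s) := by
  induction m with
  | zero => simp [iter]
  | succ n ih =>
    calc l1 (fun s => iter d P (n+1) s - iter d' P (n+1) s)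
        ≤ γ * l1 (fun s => iter d P n s - iter d' P n s) :=
          hc _ _ (iter_prob hd hP n) (iter_prob hd' hP n)
      _ ≤ γ * (γ ^ n * l1 (fun s => d s - d' s)) := by
          exact mul_le_mul_of_nonneg_left ih hγ0
      _ = γ ^ (n+1) * l1 (fun s => d s - d' s) := by ring

/-- the bias series h(s) = ∑_{m≥0} ((e_s ⬝ P^m)·g − d∞·g) converges
absolutely and is bounded in absolute value by 2/(1−γ) at every state. -/
theorem stmt_6 {S : Type*} [Fintype S] [Nonempty S] [DecidableEq S]
    (P : S → S → ℝ) (γ : ℝ) (hγ0 : 0 ≤ γ) (hγ1 : γ < 1)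
    (hP : RowStochastic P) (hc : Contractive γ P)
    (dinf : S → ℝ) (hdinf : IsProbVec dinf) (hstat : vmul dinf P = dinf)
    (g : S → ℝ) (hg : ∀ s, 0 ≤ g s ∧ g s ≤ 1) :
    (∀ s : S, Summable (fun m : ℕ => |dot (iter (pm s) P m) g - dot dinf g|)) ∧
    (∀ s : S, |∑' m : ℕ, (dot (iter (pm s) P m) g - dot dinf g)| ≤ 2 / (1 - γ)) := by
  have hl1pm : ∀ s : S, l1 (fun s' => pm s s' - dinf s') ≤ 2 := by
    intro s
    calc l1 (fun s' => pm s s' - dinf s')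
        ≤ ∑ s', (|pm s s'| + |dinf s'|) :=
          Finset.sum_le_sum fun s' _ => abs_sub _ _
      _ = 2 := by
          rw [Finset.sum_add_distrib]
          have h1 : ∀ s', |pm s s'| = pm s s' := fun s' => abs_of_nonneg ((pm_prob s).1 s')
          have h2 : ∀ s', |dinf s'| = dinf s' := fun s' => abs_of_nonneg (hdinf.1 s')
          simp only [h1, h2, (pm_prob s).2, hdinf.2]; norm_num
  have key : ∀ (s : S) (m : ℕ),
      |dot (iter (pm s) P m) g - dot dinf g| ≤ 2 * γ ^ m := by
    intro s m
    have hdot : |dot (iter (pm s) P m) g - dot dinf g|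
        ≤ l1 (fun s' => iter (pm s) P m s' - dinf s') := by
      unfold dot l1
      rw [← Finset.sum_sub_distrib]
      calc |∑ s', (iter (pm s) P m s' * g s' - dinf s' * g s')|
          ≤ ∑ s', |iter (pm s) P m s' * g s' - dinf s' * g s'| :=
            Finset.abs_sum_le_sum_abs _ _
        _ ≤ ∑ s', |iter (pm s) P m s' - dinf s'| := by
            apply Finset.sum_le_sum
            intro s' _
            rw [← sub_mul, abs_mul]
            have : |g s'| ≤ 1 := abs_le.mpr ⟨by linarith [(hg s').1], (hg s').2⟩
            calc |iter (pm s) P m s' - dinf s'| * |g s'|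
                ≤ |iter (pm s) P m s' - dinf s'| * 1 :=
                  mul_le_mul_of_nonneg_left this (abs_nonneg _)
              _ = _ := mul_one _
    have hl1 : l1 (fun s' => iter (pm s) P m s' - dinf s') ≤ γ ^ m * 2 := by
      have := contract_pow hc hP hγ0 (pm_prob s) hdinf m
      calc l1 (fun s' => iter (pm s) P m s' - dinf s')
          = l1 (fun s' => iter (pm s) P m s' - iter dinf P m s') := by
            rw [iter_stat hstat]
        _ ≤ γ ^ m * l1 (fun s' => pm s s' - dinf s') := this
        _ ≤ γ ^ m * 2 :=
            mul_le_mul_of_nonneg_left (hl1pm s) (pow_nonneg hγ0 m)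
    linarith
  have hgeo : Summable (fun m : ℕ => 2 * γ ^ m) :=
    (summable_geometric_of_lt_one hγ0 hγ1).mul_left 2
  have hsum : ∀ s : S, Summable (fun m : ℕ => |dot (iter (pm s) P m) g - dot dinf g|) :=
    fun s => Summable.of_nonneg_of_le (fun m => abs_nonneg _) (key s) hgeo
  refine ⟨hsum, fun s => ?_⟩
  have h0 : Summable (fun m : ℕ => ‖dot (iter (pm s) P m) g - dot dinf g‖) := by
    simp only [Real.norm_eq_abs]; exact hsum s
  have h1' := norm_tsum_le_tsum_norm h0
  simp only [Real.norm_eq_abs] at h1'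
  have h1 : |∑' m : ℕ, (dot (iter (pm s) P m) g - dot dinf g)|
      ≤ ∑' m : ℕ, |dot (iter (pm s) P m) g - dot dinf g| := h1'
  have h2 : (∑' m : ℕ, |dot (iter (pm s) P m) g - dot dinf g|)
      ≤ ∑' m : ℕ, 2 * γ ^ m := Summable.tsum_le_tsum (key s) (hsum s) hgeo
  have h3 : (∑' m : ℕ, 2 * γ ^ m) = 2 / (1 - γ) := by
    rw [tsum_mul_left, tsum_geometric_of_lt_one hγ0 hγ1]
    ring
  linarith
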